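/- Let t₂, t₃, t₄, η : ℂ → ℂ satisfy the symmetrical system (8): t₂' = (i/π){η + (π²/12)(t₃⁴ + t₄⁴)}t₂, t₃' = (i/π){η + (π²/12)(t₂⁴ - t₄⁴)}t₃, t₄' = (i/π){η - (π²/12)(t₂⁴ + t₃⁴)}t₄, η' = (i/π){2η² - (π⁴/144)(t₂⁸ + t₃⁸ + t₄⁸)}. Then wherever t₂t₃t₄ ≠ 0, the function U := (t₃⁴ - t₂⁴ - t₄⁴)³/(t₂⁴t₃⁴t₄⁴) has vanishing derivative. -/

import Mathlib

open Complex

/-- Proposition 2: the rational first integral (15) of the symmetrical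
system (8). -/
theorem symmetric_system_integral (t₂ t₃ t₄ η : ℂ → ℂ)
    (h2 : Differentiable ℂ t₂) (h3 : Differentiable ℂ t₃)
    (h4 : Differentiable ℂ t₄) (hη : Differentiable ℂ η)
    (hd2 : ∀ τ, deriv t₂ τ = (Complex.I / (Real.pi : ℂ)) *
      (η τ + ((Real.pi : ℂ) ^ 2 / 12) * ((t₃ τ) ^ 4 + (t₄ τ) ^ 4)) * t₂ τ)
    (hd3 : ∀ τ, deriv t₃ τ = (Complex.I / (Real.pi : ℂ)) *
      (η τ + ((Real.pi : ℂ) ^ 2 / 12) * ((t₂ τ) ^ 4 - (t₄ τ) ^ 4)) * t₃ τ)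
    (hd4 : ∀ τ, deriv t₄ τ = (Complex.I / (Real.pi : ℂ)) *
      (η τ - ((Real.pi : ℂ) ^ 2 / 12) * ((t₂ τ) ^ 4 + (t₃ τ) ^ 4)) * t₄ τ)
    (hdη : ∀ τ, deriv η τ = (Complex.I / (Real.pi : ℂ)) *
      (2 * (η τ) ^ 2 - ((Real.pi : ℂ) ^ 4 / 144) *
        ((t₂ τ) ^ 8 + (t₃ τ) ^ 8 + (t₄ τ) ^ 8))) :
    ∀ τ, t₂ τ * t₃ τ * t₄ τ ≠ 0 →
      deriv (fun τ => ((t₃ τ) ^ 4 - (t₂ τ) ^ 4 - (t₄ τ) ^ 4) ^ 3 /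
        ((t₂ τ) ^ 4 * (t₃ τ) ^ 4 * (t₄ τ) ^ 4)) τ = 0 := by
  intro τ hτ
  have h2n : t₂ τ ≠ 0 := fun h => hτ (by simp [h])
  have h3n : t₃ τ ≠ 0 := fun h => hτ (by simp [h])
  have h4n : t₄ τ ≠ 0 := fun h => hτ (by simp [h])
  have hπ : (Real.pi : ℂ) ≠ 0 := by
    exact_mod_cast Complex.ofReal_ne_zero.mpr Real.pi_ne_zero
  have D2 : HasDerivAt t₂ ((Complex.I / (Real.pi : ℂ)) *
      (η τ + ((Real.pi : ℂ) ^ 2 / 12) * ((t₃ τ) ^ 4 + (t₄ τ) ^ 4)) * t₂ τ) τ :=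
    hd2 τ ▸ (h2 τ).hasDerivAt
  have D3 : HasDerivAt t₃ ((Complex.I / (Real.pi : ℂ)) *
      (η τ + ((Real.pi : ℂ) ^ 2 / 12) * ((t₂ τ) ^ 4 - (t₄ τ) ^ 4)) * t₃ τ) τ :=
    hd3 τ ▸ (h3 τ).hasDerivAt
  have D4 : HasDerivAt t₄ ((Complex.I / (Real.pi : ℂ)) *
      (η τ - ((Real.pi : ℂ) ^ 2 / 12) * ((t₂ τ) ^ 4 + (t₃ τ) ^ 4)) * t₄ τ) τ :=
    hd4 τ ▸ (h4 τ).hasDerivAt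
  have HN := (((D3.pow 4).sub (D2.pow 4)).sub (D4.pow 4)).pow 3
  have HD := ((D2.pow 4).mul (D3.pow 4)).mul (D4.pow 4)
  have hDn : (t₂ τ) ^ 4 * (t₃ τ) ^ 4 * (t₄ τ) ^ 4 ≠ 0 := by
    exact mul_ne_zero (mul_ne_zero (pow_ne_zero _ h2n) (pow_ne_zero _ h3n))
      (pow_ne_zero _ h4n)
  have Hdiv := HN.div HD hDn
  refine Hdiv.deriv.trans ?_
  rw [div_eq_zero_iff]
  left
  simp only [Pi.pow_apply, Pi.sub_apply, Pi.mul_apply]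
  field_simp
  ring
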